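/- Let n ≥ 4 and let C_n be the cycle on n vertices. If n is even, then η(C_n) = 2; if n is odd, then η(C_n) = 3. -/

import Mathlib

open Classical in
/-- Sum of the labels `f` over the open neighborhood of `v` in `G`. -/
noncomputable def nbrSum {V : Type*} [Fintype V] (G : SimpleGraph V) (f : V → ℕ) (v : V) : ℕ :=
  ∑ w ∈ Finset.univ.filter (fun w => G.Adj v w), f w

open Classical in
/-- The degree of `v` in `G`. -/
noncomputable def deg {V : Type*} [Fintype V] (G : SimpleGraph V) (v : V) : ℕ :=
  (Finset.univ.filter (fun w => G.Adj v w)).card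

/-- `f : V → {1,…,k}` is an additive `k`-coloring of `G`: labels lie in `{1,…,k}` and
adjacent vertices get distinct open-neighborhood sums. -/
def IsAdditiveColoring {V : Type*} [Fintype V] (G : SimpleGraph V) (k : ℕ) (f : V → ℕ) : Prop :=
  (∀ v, 1 ≤ f v ∧ f v ≤ k) ∧ ∀ u v, G.Adj u v → nbrSum G f u ≠ nbrSum G f v

/-- The additive chromatic number `η(G)`: the least `k` admitting an additive `k`-coloring. -/
noncomputable def eta {V : Type*} [Fintype V] (G : SimpleGraph V) : ℕ :=
  sInf {k | ∃ f : V → ℕ, IsAdditiveColoring G k f}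

/-! ### Auxiliary machinery -/

open scoped Fin.NatCast Fin.CommRing

lemma nbrSum_cycle {m : ℕ} (f : Fin (m + 4) → ℕ) (v : Fin (m + 4)) :
    nbrSum (SimpleGraph.cycleGraph (m + 4)) f v = f (v - 1) + f (v + 1) := by
  have hne : v - 1 ≠ v + 1 := by
    intro h
    have h2 : v + (1 + 1) = v := by
      rw [← add_assoc, ← h]; ring
    have h3 : (1 + 1 : Fin (m + 4)) = 0 := by
      have : v + (1 + 1) = v + 0 := by rw [add_zero]; exact h2
      exact add_left_cancel this
    have h4 : (1 + 1 : Fin (m + 4)).val = 0 := by rw [h3]; rfl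
    rw [Fin.val_add, Fin.val_one'] at h4
    rw [Nat.mod_eq_of_lt (show 1 < m + 4 by omega)] at h4
    rw [Nat.mod_eq_of_lt (show 1 + 1 < m + 4 by omega)] at h4
    omega
  have hset : (Finset.univ.filter (fun w => (SimpleGraph.cycleGraph (m+4)).Adj v w))
      = {v - 1, v + 1} := by
    ext w
    simp only [Finset.mem_filter, Finset.mem_univ, true_and, Finset.mem_insert,
      Finset.mem_singleton]
    rw [← SimpleGraph.mem_neighborSet]
    rw [show (m + 4) = (m + 2) + 2 from rfl] at *
    rw [SimpleGraph.cycleGraph_neighborSet]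
    simp
  rw [nbrSum, Finset.filter_congr_decidable, hset, Finset.sum_pair hne]

lemma adj_succ {m : ℕ} (u : Fin (m + 4)) :
    (SimpleGraph.cycleGraph (m + 4)).Adj u (u + 1) := by
  have h : ((u + 1) - u : Fin (m + 4)) = 1 := by ring
  exact SimpleGraph.cycleGraph_adj.mpr (Or.inr h)

lemma coloring_of_key {m : ℕ} (k : ℕ) (f : Fin (m + 4) → ℕ)
    (hb : ∀ v, 1 ≤ f v ∧ f v ≤ k)
    (hkey : ∀ u : Fin (m + 4), f (u - 1) + f (u + 1) ≠ f u + f (u + 1 + 1)) :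
    IsAdditiveColoring (SimpleGraph.cycleGraph (m + 4)) k f := by
  refine ⟨hb, ?_⟩
  have main : ∀ u : Fin (m + 4),
      nbrSum (SimpleGraph.cycleGraph (m + 4)) f u
        ≠ nbrSum (SimpleGraph.cycleGraph (m + 4)) f (u + 1) := by
    intro u
    rw [nbrSum_cycle, nbrSum_cycle, add_sub_cancel_right]
    exact hkey u
  intro u v huv
  rcases SimpleGraph.cycleGraph_adj.mp huv with h | h
  · have hu : u = v + 1 := by rw [sub_eq_iff_eq_add] at h; rw [h]; exact add_comm 1 v
    rw [hu]
    exact (main v).symm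
  · have hv : v = u + 1 := by rw [sub_eq_iff_eq_add] at h; rw [h]; exact add_comm 1 u
    rw [hv]
    exact main u

lemma val_facts {m : ℕ} (u : Fin (m + 4)) :
    (u - 1).val = (u.val + (m + 4 - 1)) % (m + 4) ∧
    (u + 1).val = (u.val + 1) % (m + 4) ∧
    (u + 1 + 1).val = (u.val + 2) % (m + 4) := by
  have h1 : (1 : Fin (m + 4)).val = 1 := by
    rw [Fin.val_one']; exact Nat.mod_eq_of_lt (by omega)
  have e1 : (u - 1).val = (u.val + (m + 4 - 1)) % (m + 4) := by
    rw [Fin.sub_def]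
    simp only [h1]
    congr 1
    omega
  have e2 : (u + 1).val = (u.val + 1) % (m + 4) := by
    rw [Fin.val_add, h1]
  have e3 : (u + 1 + 1).val = (u.val + 2) % (m + 4) := by
    rw [Fin.val_add, h1, e2, Nat.mod_add_mod]
  exact ⟨e1, e2, e3⟩

/-! ### The explicit colorings -/

def Feven (n j : ℕ) : ℕ := if (j % 4 = 3 ∧ j + 2 < n) ∨ j = n - 1 then 2 else 1
def Fodd (n j : ℕ) : ℕ := if j = n - 1 then 3 else if j % 4 = 3 then 2 else 1

lemma mod_e1 {n a : ℕ} (h4 : 4 ≤ n) (ha : a < n) :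
    (a + (n - 1)) % n = if a = 0 then n - 1 else a - 1 := by
  split_ifs with h
  · subst h; rw [Nat.zero_add]; exact Nat.mod_eq_of_lt (by omega)
  · rw [show a + (n - 1) = (a - 1) + n by omega, Nat.add_mod_right]
    exact Nat.mod_eq_of_lt (by omega)

lemma mod_e2 {n a : ℕ} (h4 : 4 ≤ n) (ha : a < n) :
    (a + 1) % n = if a = n - 1 then 0 else a + 1 := by
  split_ifs with h
  · subst h; rw [show n - 1 + 1 = n by omega]; exact Nat.mod_self n
  · exact Nat.mod_eq_of_lt (by omega)

lemma mod_e3 {n a : ℕ} (h4 : 4 ≤ n) (ha : a < n) :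
    (a + 2) % n = if a = n - 2 then 0 else if a = n - 1 then 1 else a + 2 := by
  split_ifs with h h'
  · subst h; rw [show n - 2 + 2 = n by omega]; exact Nat.mod_self n
  · subst h'; rw [show n - 1 + 2 = 1 + n by omega, Nat.add_mod_right]
    exact Nat.mod_eq_of_lt (by omega)
  · exact Nat.mod_eq_of_lt (by omega)

lemma keyEven {n a : ℕ} (h4 : 4 ≤ n) (he : n % 2 = 0) (ha : a < n) :
    Feven n ((a + (n - 1)) % n) + Feven n ((a + 1) % n)
      ≠ Feven n a + Feven n ((a + 2) % n) := by
  rw [mod_e1 h4 ha, mod_e2 h4 ha, mod_e3 h4 ha]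
  unfold Feven
  split_ifs <;>
    first
      | omega
      | ((simp only [false_and, false_or, true_and, and_true, or_false] at *) <;> omega)

lemma keyOdd {n a : ℕ} (h4 : 4 ≤ n) (he : n % 2 = 1) (ha : a < n) :
    Fodd n ((a + (n - 1)) % n) + Fodd n ((a + 1) % n)
      ≠ Fodd n a + Fodd n ((a + 2) % n) := by
  rw [mod_e1 h4 ha, mod_e2 h4 ha, mod_e3 h4 ha]
  unfold Fodd
  split_ifs <;>
    first
      | omega
      | ((simp only [false_and, false_or, true_and, and_true, or_false] at *) <;> omega)

lemma even_coloring {m : ℕ} (he : (m + 4) % 2 = 0) :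
    IsAdditiveColoring (SimpleGraph.cycleGraph (m + 4)) 2
      (fun v : Fin (m + 4) => Feven (m + 4) v.val) := by
  apply coloring_of_key
  · intro v; unfold Feven; split_ifs <;> omega
  · intro u
    obtain ⟨e1, e2, e3⟩ := val_facts u
    simp only [e1, e2, e3]
    exact keyEven (by omega) he u.isLt

lemma odd_coloring {m : ℕ} (ho : (m + 4) % 2 = 1) :
    IsAdditiveColoring (SimpleGraph.cycleGraph (m + 4)) 3
      (fun v : Fin (m + 4) => Fodd (m + 4) v.val) := by
  apply coloring_of_key
  · intro v; unfold Fodd; split_ifs <;> omega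
  · intro u
    obtain ⟨e1, e2, e3⟩ := val_facts u
    simp only [e1, e2, e3]
    exact keyOdd (by omega) ho u.isLt

/-! ### Lower bounds -/

lemma two_le {m k : ℕ} (f : Fin (m + 4) → ℕ)
    (hcol : IsAdditiveColoring (SimpleGraph.cycleGraph (m + 4)) k f) : 2 ≤ k := by
  by_contra hk
  push_neg at hk
  have hall : ∀ w, f w = 1 := fun w => by have := hcol.1 w; omega
  have hadj := adj_succ (0 : Fin (m + 4))
  have hne := hcol.2 _ _ hadj
  rw [nbrSum_cycle, nbrSum_cycle] at hne
  simp [hall] at hne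

/-- The parity potential for the odd lower bound. -/
def phi (a b c : ℕ) : Bool :=
  decide (((a - 1) + (c - 1) + (a - 1) * (b - 1) + (a - 1) * (c - 1) + (b - 1) * (c - 1)) % 2 = 1)

lemma phi_edge {a b c e : ℕ} (ha : a = 1 ∨ a = 2) (hb : b = 1 ∨ b = 2)
    (hc : c = 1 ∨ c = 2) (he : e = 1 ∨ e = 2) (h : a + c ≠ b + e) :
    phi a b c ≠ phi b c e := by
  rcases ha with rfl | rfl <;> rcases hb with rfl | rfl <;> rcases hc with rfl | rfl <;>
    rcases he with rfl | rfl <;> first | decide | (exact absurd (by decide) h)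

lemma three_le {m k : ℕ} (ho : (m + 4) % 2 = 1) (f : Fin (m + 4) → ℕ)
    (hcol : IsAdditiveColoring (SimpleGraph.cycleGraph (m + 4)) k f) : 3 ≤ k := by
  by_contra hk
  push_neg at hk
  have hall : ∀ w, f w = 1 ∨ f w = 2 := fun w => by have := hcol.1 w; omega
  set g : ℕ → ℕ := fun i => f ((i : ℕ) : Fin (m + 4)) with hg
  have hcond : ∀ i : ℕ, g i + g (i + 2) ≠ g (i + 1) + g (i + 3) := by
    intro i
    set u : Fin (m + 4) := ((i : ℕ) : Fin (m + 4)) + 1 with hu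
    have hadj := adj_succ u
    have hne := hcol.2 _ _ hadj
    rw [nbrSum_cycle, nbrSum_cycle] at hne
    simp only [add_sub_cancel_right] at hne
    have c0 : u - 1 = ((i : ℕ) : Fin (m + 4)) := add_sub_cancel_right _ 1
    have c1 : ((i + 1 : ℕ) : Fin (m + 4)) = u := by push_cast [hu]; ring
    have c2 : ((i + 2 : ℕ) : Fin (m + 4)) = u + 1 := by push_cast [hu]; ring
    have c3 : ((i + 3 : ℕ) : Fin (m + 4)) = u + 1 + 1 := by push_cast [hu]; ring
    simp only [hg, c1, c2, c3, c0]
    rwa [c0] at hne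
  set ψ : ℕ → Bool := fun i => phi (g i) (g (i + 1)) (g (i + 2)) with hψ
  have step : ∀ i, ψ (i + 1) = !ψ i := by
    intro i
    have hd : ψ i ≠ ψ (i + 1) := by
      simp only [hψ]
      have : i + 1 + 1 = i + 2 := by ring
      rw [this]
      have : i + 1 + 2 = i + 3 := by ring
      rw [this]
      exact phi_edge (hall _) (hall _) (hall _) (hall _) (hcond i)
    revert hd
    cases ψ i <;> cases ψ (i + 1) <;> decide
  have par : ∀ i, ψ i = if i % 2 = 0 then ψ 0 else !ψ 0 := by
    intro i
    induction i with
    | zero => simp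
    | succ j ih =>
      rw [step j, ih]
      rcases Nat.mod_two_eq_zero_or_one j with h | h
      · have h2 : (j + 1) % 2 = 1 := by omega
        simp [h, h2]
      · have h2 : (j + 1) % 2 = 0 := by omega
        simp [h, h2, Bool.not_not]
  have hper : ∀ j : ℕ, g (j + (m + 4)) = g j := by
    intro j
    simp only [hg]
    congr 1
    rw [Nat.cast_add, Fin.natCast_self, add_zero]
  have hpsi : ψ (m + 4) = ψ 0 := by
    simp only [hψ]
    have q0 : g (m + 4) = g 0 := by
      have := hper 0; rwa [Nat.zero_add] at this
    have q1 : g (m + 4 + 1) = g 1 := by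
      have := hper 1; rwa [show 1 + (m + 4) = m + 4 + 1 by ring] at this
    have q2 : g (m + 4 + 2) = g 2 := by
      have := hper 2; rwa [show 2 + (m + 4) = m + 4 + 2 by ring] at this
    rw [q0, q1, q2]
  have hodd := par (m + 4)
  rw [if_neg (by omega), hpsi] at hodd
  exact (Bool.eq_not_self (ψ 0)).mp hodd

/-! ### Main theorem -/

/-- For `n ≥ 4`: `η(C_n) = 2` if `n` is even, and `η(C_n) = 3` if `n` is odd. -/
theorem eta_cycle (n : ℕ) (hn : 4 ≤ n) :
    (Even n → eta (SimpleGraph.cycleGraph n) = 2) ∧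
    (Odd n → eta (SimpleGraph.cycleGraph n) = 3) := by
  obtain ⟨m, rfl⟩ : ∃ m, n = m + 4 := ⟨n - 4, by omega⟩
  constructor
  · intro hev
    have he : (m + 4) % 2 = 0 := Nat.even_iff.mp hev
    have mem2 : (2 : ℕ) ∈ {k | ∃ f : Fin (m + 4) → ℕ,
        IsAdditiveColoring (SimpleGraph.cycleGraph (m + 4)) k f} :=
      ⟨_, even_coloring he⟩
    refine le_antisymm (Nat.sInf_le mem2) (le_csInf ⟨2, mem2⟩ ?_)
    rintro k ⟨f, hf⟩
    exact two_le f hf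
  · intro hod
    have ho : (m + 4) % 2 = 1 := Nat.odd_iff.mp hod
    have mem3 : (3 : ℕ) ∈ {k | ∃ f : Fin (m + 4) → ℕ,
        IsAdditiveColoring (SimpleGraph.cycleGraph (m + 4)) k f} :=
      ⟨_, odd_coloring ho⟩
    refine le_antisymm (Nat.sInf_le mem3) (le_csInf ⟨3, mem3⟩ ?_)
    rintro k ⟨f, hf⟩
    exact three_le ho f hf
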